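/- There is no minimal topological dynamical system with more than one point that contains a point satisfying property (★). -/

import Mathlib

open Set Filter Topology Function

namespace PaperFormal

/-- The return-time set `N(x,U) = {n ∈ ℤ₊ : Tⁿ x ∈ U}`. -/
def retTimes {X : Type} (T : X → X) (x : X) (U : Set X) : Set ℕ :=
  {n : ℕ | T^[n] x ∈ U}

/-- A point is recurrent if `N(x,U)` is infinite for every neighborhood `U` of `x`. -/
def RecurrentPt {X : Type} [TopologicalSpace X] (T : X → X) (x : X) : Prop :=
  ∀ U ∈ nhds x, (retTimes T x U).Infinite

/-- The (forward) orbit closure of a point. -/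
def orbitClosure {X : Type} [TopologicalSpace X] (T : X → X) (x : X) : Set X :=
  closure (Set.range fun n : ℕ => T^[n] x)

/-- A pair `(x,y)` is proximal if `lim T^{nᵢ} x = lim T^{nᵢ} y` along some sequence `nᵢ`. -/
def ProximalPair {X : Type} [TopologicalSpace X] (T : X → X) (x y : X) : Prop :=
  ∃ (u : ℕ → ℕ) (z : X),
    Tendsto (fun i => T^[u i] x) atTop (nhds z) ∧
    Tendsto (fun i => T^[u i] y) atTop (nhds z)

/-- A point `x` is distal if every `y` in its orbit closure proximal to `x` equals `x`. -/
def DistalPt {X : Type} [TopologicalSpace X] (T : X → X) (x : X) : Prop :=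
  ∀ y ∈ orbitClosure T x, ProximalPair T x y → y = x

/-- `A` is a minimal set: nonempty, closed, invariant, with no proper such subset. -/
def IsMinimalSet {X : Type} [TopologicalSpace X] (T : X → X) (A : Set X) : Prop :=
  A.Nonempty ∧ IsClosed A ∧ Set.MapsTo T A A ∧
    ∀ B ⊆ A, B.Nonempty → IsClosed B → Set.MapsTo T B B → B = A

/-- A point is minimal (almost periodic) if its orbit closure is a minimal set. -/
def IsMinimalPt {X : Type} [TopologicalSpace X] (T : X → X) (x : X) : Prop :=
  IsMinimalSet T (orbitClosure T x)

/-- A minimal system: no proper nonempty closed invariant subset. -/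
def MinimalSys {X : Type} [TopologicalSpace X] (T : X → X) : Prop :=
  ∀ B : Set X, B.Nonempty → IsClosed B → Set.MapsTo T B B → B = Set.univ

/-- A transitive system: `N(U,V)` is infinite for all opene `U`, `V`. -/
def TransitiveSys {X : Type} [TopologicalSpace X] (T : X → X) : Prop :=
  ∀ U V : Set X, IsOpen U → IsOpen V → U.Nonempty → V.Nonempty →
    {n : ℕ | (U ∩ T^[n] ⁻¹' V).Nonempty}.Infinite

/-- Transitivity of the subsystem on an invariant subset `A` (relative open sets). -/
def TransitiveOn {X : Type} [TopologicalSpace X] (T : X → X) (A : Set X) : Prop :=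
  ∀ U V : Set X, IsOpen U → IsOpen V → (U ∩ A).Nonempty → (V ∩ A).Nonempty →
    {n : ℕ | (U ∩ A ∩ T^[n] ⁻¹' V).Nonempty}.Infinite

/-- A transitive point: a point with dense forward orbit. -/
def TransPt {X : Type} [TopologicalSpace X] (T : X → X) (x : X) : Prop :=
  Dense (Set.range fun n : ℕ => T^[n] x)

/-- Finite sums of the sequence `p` over nonempty finite index sets contained in `[n,∞)`. -/
def FSfrom (p : ℕ → ℕ) (n : ℕ) : Set ℕ :=
  {m | ∃ α : Finset ℕ, α.Nonempty ∧ (∀ i ∈ α, n ≤ i) ∧ m = ∑ i ∈ α, p i}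

/-- Finite sums of the sequence `p` over nonempty finite index sets. -/
def FS (p : ℕ → ℕ) : Set ℕ := FSfrom p 0

/-- An IP set: a set containing all finite sums of some sequence of natural numbers. -/
def IPSet (A : Set ℕ) : Prop :=
  ∃ p : ℕ → ℕ, (∀ i, 0 < p i) ∧ FS p ⊆ A

/-- An IP* set: a set meeting every IP set. -/
def IPStar (A : Set ℕ) : Prop :=
  ∀ B : Set ℕ, IPSet B → (A ∩ B).Nonempty

/-- A syndetic set: a set with bounded gaps. -/
def Syndetic (S : Set ℕ) : Prop :=
  ∃ N : ℕ, ∀ m : ℕ, ∃ k ∈ S, m ≤ k ∧ k ≤ m + N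

/-- A thick set: a set containing arbitrarily long runs of consecutive integers. -/
def Thick (S : Set ℕ) : Prop :=
  ∀ n : ℕ, ∃ m : ℕ, ∀ i ≤ n, m + i ∈ S

/-- A piecewise syndetic set: an intersection of a syndetic set with a thick set. -/
def PiecewiseSyndetic (A : Set ℕ) : Prop :=
  ∃ S₁ S₂ : Set ℕ, Syndetic S₁ ∧ Thick S₂ ∧ A = S₁ ∩ S₂

/-- A thickly syndetic set: a set meeting every piecewise syndetic set. -/
def ThicklySyndetic (A : Set ℕ) : Prop :=
  ∀ B : Set ℕ, PiecewiseSyndetic B → (A ∩ B).Nonempty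

/-- `x` is `F`-recurrent for the family `F` if `N(x,U) ∈ F` for every neighborhood `U`. -/
def FRecurrentPt {X : Type} [TopologicalSpace X] (F : Set (Set ℕ)) (T : X → X) (x : X) :
    Prop :=
  ∀ U ∈ nhds x, retTimes T x U ∈ F

/-- `x` is `F`-product recurrent: `(x,y)` is recurrent for every `F`-recurrent point `y`
in any topological dynamical system `(Y,S)`. -/
def FProductRecurrent {X : Type} [TopologicalSpace X] (F : Set (Set ℕ)) (T : X → X)
    (x : X) : Prop :=
  ∀ (Y : Type) [MetricSpace Y] [CompactSpace Y] (S : Y → Y),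
    Continuous S → Function.Surjective S →
      ∀ y : Y, FRecurrentPt F S y → RecurrentPt (Prod.map T S) (x, y)

/-- A joining of `(X,T)` and `(Y,S)`: a nonempty closed invariant subset of `X × Y`
projecting onto both coordinates. -/
def Joining {X Y : Type} [TopologicalSpace X] [TopologicalSpace Y]
    (T : X → X) (S : Y → Y) (J : Set (X × Y)) : Prop :=
  J.Nonempty ∧ IsClosed J ∧ Set.MapsTo (Prod.map T S) J J ∧
    Prod.fst '' J = Set.univ ∧ Prod.snd '' J = Set.univ

/-- Two systems are disjoint if their only joining is the full product. -/
def DisjointSys {X Y : Type} [TopologicalSpace X] [TopologicalSpace Y]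
    (T : X → X) (S : Y → Y) : Prop :=
  ∀ J : Set (X × Y), Joining T S J → J = Set.univ

/-- Property (★) of a point: for each neighborhood `V` of `x` there is `n` such that for
every finite set `S` whose distinct elements are at distance `≥ n`, some common shift `ℓ`
puts all of `T^{s+ℓ} x`, `s ∈ S`, inside `V`. -/
def StarProp {X : Type} [TopologicalSpace X] (T : X → X) (x : X) : Prop :=
  ∀ V ∈ nhds x, ∃ n : ℕ, ∀ S : Finset ℕ,
    (∀ s ∈ S, ∀ t ∈ S, s < t → n ≤ t - s) →
      ∃ ℓ : ℕ, ∀ s ∈ S, T^[s + ℓ] x ∈ V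

/-- `F` is an independence set for the pair `(U₀, U₁)`. -/
def IndepSet {X : Type} (T : X → X) (U₀ U₁ : Set X) (F : Set ℕ) : Prop :=
  ∀ J : Finset ℕ, ↑J ⊆ F → J.Nonempty → ∀ s : ℕ → Bool,
    (⋂ j ∈ J, T^[j] ⁻¹' (if s j then U₁ else U₀)).Nonempty


/-- Every nonempty closed invariant set contains a minimal nonempty closed invariant set. -/
private lemma exists_minimal_invariant {X : Type} [TopologicalSpace X] [CompactSpace X]
    (S : X → X) (C : Set X) (hne : C.Nonempty) (hcl : IsClosed C) (hinv : Set.MapsTo S C C) :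
    ∃ M, M ⊆ C ∧ M.Nonempty ∧ IsClosed M ∧ Set.MapsTo S M M ∧
      ∀ B ⊆ M, B.Nonempty → IsClosed B → Set.MapsTo S B B → B = M := by
  have H := zorn_superset_nonempty
      {A : Set X | A ⊆ C ∧ A.Nonempty ∧ IsClosed A ∧ Set.MapsTo S A A} ?_ C
      ⟨subset_rfl, hne, hcl, hinv⟩
  · obtain ⟨M, hMC, hMmem, hMmin⟩ := H
    refine ⟨M, hMmem.1, hMmem.2.1, hMmem.2.2.1, hMmem.2.2.2, fun B hBM hBne hBcl hBinv => ?_⟩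
    exact Set.Subset.antisymm hBM
      (hMmin ⟨hBM.trans hMmem.1, hBne, hBcl, hBinv⟩ hBM)
  · intro c hc𝒜 hchain hcne
    have hce : Nonempty c := hcne.to_subtype
    have hdir : DirectedOn (· ⊇ ·) c := by
      intro A hA B hB
      rcases hchain.total hA hB with h | h
      · exact ⟨A, hA, subset_rfl, h⟩
      · exact ⟨B, hB, h, subset_rfl⟩
    have hint : (⋂₀ c).Nonempty := by
      refine IsCompact.nonempty_sInter_of_directed_nonempty_isCompact_isClosed hdir
        (fun U hU => (hc𝒜 hU).2.1) (fun U hU => (hc𝒜 hU).2.2.1.isCompact)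
        (fun U hU => (hc𝒜 hU).2.2.1)
    obtain ⟨A₀, hA₀⟩ := hcne
    refine ⟨⋂₀ c, ⟨(sInter_subset_of_mem hA₀).trans (hc𝒜 hA₀).1, hint,
      isClosed_sInter (fun U hU => (hc𝒜 hU).2.2.1), ?_⟩,
      fun s hs => sInter_subset_of_mem hs⟩
    intro z hz
    exact mem_sInter.mpr fun U hU => (hc𝒜 hU).2.2.2 (mem_sInter.mp hz U hU)

/-- no minimal system with more than one point contains a point satisfying
property (★). -/
theorem statement_10 :
    ¬ ∃ (X : Type) (_ : MetricSpace X) (_ : CompactSpace X) (T : X → X),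
      Continuous T ∧ Function.Surjective T ∧ MinimalSys T ∧
        (∃ a b : X, a ≠ b) ∧ ∃ x : X, StarProp T x := by
  classical
  rintro ⟨X, i1, i2, T, hT, hTsurj, hmin, ⟨a, b, hab⟩, x, hstar⟩
  -- pick a point different from x
  obtain ⟨y, hyx⟩ : ∃ y : X, y ≠ x := by
    by_cases h : x = a
    · exact ⟨b, fun hh => hab (hh ▸ h).symm⟩
    · exact ⟨a, fun hh => h hh.symm⟩
  have hdpos : 0 < dist x y := dist_pos.mpr fun h => hyx h.symm
  set r : ℝ := dist x y / 2 with hr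
  have hrpos : 0 < r := by positivity
  set K : Set X := Metric.closedBall x r with hKdef
  have hKcl : IsClosed K := Metric.isClosed_closedBall
  have hyK : y ∉ K := by
    simp only [hKdef, Metric.mem_closedBall]
    rw [dist_comm]
    intro h
    rw [hr] at h
    linarith
  obtain ⟨n, hn⟩ := hstar (Metric.ball x r) (Metric.ball_mem_nhds x hrpos)
  obtain ⟨p, hpge, hp⟩ := Nat.exists_infinite_primes (max n 2)
  have hp2 : 2 ≤ p := le_trans (le_max_right n 2) hpge
  have hnp : n ≤ p := le_trans (le_max_left n 2) hpge
  have hppos : 0 < p := by omega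
  have hTit : ∀ k : ℕ, Continuous (T^[k]) := fun k => hT.iterate k
  -- The set of points whose T^p-orbit stays in K
  set C : Set X := {z : X | ∀ j : ℕ, T^[j * p] z ∈ K} with hCdef
  have hCcl : IsClosed C := by
    have : C = ⋂ j : ℕ, (T^[j * p]) ⁻¹' K := by
      ext z; simp [hCdef]
    rw [this]
    exact isClosed_iInter fun j => hKcl.preimage (hTit _)
  have hCinv : Set.MapsTo (T^[p]) C C := by
    intro z hz j
    have e : T^[j * p] (T^[p] z) = T^[(j + 1) * p] z := by
      rw [← Function.iterate_add_apply]
      ring_nf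
    show T^[j * p] (T^[p] z) ∈ K
    rw [e]
    exact hz (j + 1)
  have hCsubK : C ⊆ K := by
    intro z hz
    have := hz 0
    simpa using this
  have hCne : C.Nonempty := by
    set F : ℕ → Set X := fun k => ⋂ j : ℕ, ⋂ _ : j ≤ k, (T^[j * p]) ⁻¹' K with hFdef
    have hFcl : ∀ k, IsClosed (F k) := fun k =>
      isClosed_iInter fun j => isClosed_iInter fun _ => hKcl.preimage (hTit _)
    have hFmono : ∀ k, F (k + 1) ⊆ F k := by
      intro k z hz
      simp only [hFdef, mem_iInter] at hz ⊢
      exact fun j hj => hz j (by omega)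
    have hFne : ∀ k, (F k).Nonempty := by
      intro k
      have hgap : ∀ s ∈ (Finset.range (k + 1)).image (fun j => j * p),
          ∀ t ∈ (Finset.range (k + 1)).image (fun j => j * p), s < t → n ≤ t - s := by
        intro s hs t ht hst
        obtain ⟨i, hi, rfl⟩ := Finset.mem_image.mp hs
        obtain ⟨j, hj, rfl⟩ := Finset.mem_image.mp ht
        have hij : i < j := by
          by_contra h
          push_neg at h
          have : j * p ≤ i * p := Nat.mul_le_mul_right p h
          omega
        have h1 : i * p + p ≤ j * p := by
          have h2 : i + 1 ≤ j := hij
          calc i * p + p = (i + 1) * p := by ring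
          _ ≤ j * p := Nat.mul_le_mul_right p h2
        omega
      obtain ⟨ℓ, hℓ⟩ := hn ((Finset.range (k + 1)).image (fun j => j * p)) hgap
      refine ⟨T^[ℓ] x, ?_⟩
      simp only [hFdef, mem_iInter, Set.mem_preimage]
      intro j hj
      rw [← Function.iterate_add_apply]
      exact Metric.ball_subset_closedBall
        (hℓ (j * p) (Finset.mem_image.mpr ⟨j, Finset.mem_range.mpr (by omega), rfl⟩))
    have hiF : (⋂ k, F k).Nonempty :=
      IsCompact.nonempty_iInter_of_sequence_nonempty_isCompact_isClosed F hFmono hFne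
        ((hFcl 0).isCompact) hFcl
    obtain ⟨z, hz⟩ := hiF
    refine ⟨z, fun j => ?_⟩
    have hzj := mem_iInter.mp hz j
    simp only [hFdef, mem_iInter, Set.mem_preimage] at hzj
    exact hzj j le_rfl
  -- minimal T^p-invariant subset of C
  obtain ⟨M, hMC, hMne, hMcl, hMinv, hMmin⟩ :=
    exists_minimal_invariant (T^[p]) C hCne hCcl hCinv
  have hMcomp : IsCompact M := hMcl.isCompact
  have hMicl : ∀ i : ℕ, IsClosed (T^[i] '' M) := fun i => (hMcomp.image (hTit i)).isClosed
  have hMiinv : ∀ i : ℕ, Set.MapsTo (T^[p]) (T^[i] '' M) (T^[i] '' M) := by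
    rintro i z ⟨w, hw, rfl⟩
    exact ⟨T^[p] w, hMinv hw, by
      rw [← Function.iterate_add_apply, ← Function.iterate_add_apply, Nat.add_comm]⟩
  have hTpM : T^[p] '' M = M :=
    hMmin _ hMinv.image_subset (hMne.image _) (hMicl p) (hMiinv p)
  have hqpM : ∀ q : ℕ, T^[q * p] '' M = M := by
    intro q
    induction q with
    | zero => simp
    | succ q ih =>
      rw [show (q + 1) * p = p + q * p by ring, Function.iterate_add, Set.image_comp, ih, hTpM]
  have hmodM : ∀ t : ℕ, T^[t] '' M = T^[t % p] '' M := by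
    intro t
    calc T^[t] '' M = T^[t % p + p * (t / p)] '' M := by rw [Nat.mod_add_div]
    _ = T^[t % p] '' (T^[p * (t / p)] '' M) := by rw [Function.iterate_add, Set.image_comp]
    _ = T^[t % p] '' M := by rw [Nat.mul_comm, hqpM]
  -- each translated piece is itself minimal for T^p
  have hpiece_min : ∀ i : ℕ, i ≤ p → ∀ B ⊆ T^[i] '' M, B.Nonempty → IsClosed B →
      Set.MapsTo (T^[p]) B B → B = T^[i] '' M := by
    intro i hip B hBsub hBne hBcl hBinv
    have h1 : T^[p - i] '' B ⊆ M := by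
      calc T^[p - i] '' B ⊆ T^[p - i] '' (T^[i] '' M) := Set.image_mono hBsub
      _ = T^[(p - i) + i] '' M := by rw [Function.iterate_add, Set.image_comp]
      _ = M := by rw [Nat.sub_add_cancel hip, hTpM]
    have h2 : Set.MapsTo (T^[p]) (T^[p - i] '' B) (T^[p - i] '' B) := by
      rintro z ⟨w, hw, rfl⟩
      exact ⟨T^[p] w, hBinv hw, by
        rw [← Function.iterate_add_apply, ← Function.iterate_add_apply, Nat.add_comm]⟩
    have h3 : T^[p - i] '' B = M :=
      hMmin _ h1 (hBne.image _) ((hBcl.isCompact.image (hTit _)).isClosed) h2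
    have h4 : T^[i] '' M ⊆ B := by
      have e : T^[i] '' (T^[p - i] '' B) = T^[p] '' B := by
        rw [← Set.image_comp, ← Function.iterate_add, Nat.add_sub_cancel' hip]
      rw [h3] at e
      rw [e]
      exact hBinv.image_subset
    exact Set.Subset.antisymm hBsub h4
  -- two pieces that intersect coincide
  have hinter : ∀ i j : ℕ, i ≤ p → j ≤ p → ((T^[i] '' M) ∩ (T^[j] '' M)).Nonempty →
      T^[i] '' M = T^[j] '' M := by
    intro i j hip hjp hne2
    have hIcl : IsClosed ((T^[i] '' M) ∩ (T^[j] '' M)) := (hMicl i).inter (hMicl j)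
    have hIinv : Set.MapsTo (T^[p]) ((T^[i] '' M) ∩ (T^[j] '' M))
        ((T^[i] '' M) ∩ (T^[j] '' M)) := fun z hz => ⟨hMiinv i hz.1, hMiinv j hz.2⟩
    have e1 := hpiece_min i hip _ inter_subset_left hne2 hIcl hIinv
    have e2 := hpiece_min j hjp _ inter_subset_right hne2 hIcl hIinv
    exact e1.symm.trans e2
  -- the minimal period d of M
  have hQex : ∃ k, 0 < k ∧ T^[k] '' M = M := ⟨p, hppos, hTpM⟩
  obtain ⟨hdpos, hdM⟩ : 0 < Nat.find hQex ∧ T^[Nat.find hQex] '' M = M := Nat.find_spec hQex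
  set d := Nat.find hQex with hd
  have hdmin : ∀ k, k < d → ¬(0 < k ∧ T^[k] '' M = M) := fun k hk => Nat.find_min hQex hk
  have hdlep : d ≤ p := Nat.find_le ⟨hppos, hTpM⟩
  have hqd : ∀ q : ℕ, T^[q * d] '' M = M := by
    intro q
    induction q with
    | zero => simp
    | succ q ih =>
      rw [show (q + 1) * d = d + q * d by ring, Function.iterate_add, Set.image_comp, ih, hdM]
  have hdvd : d ∣ p := by
    have hrM : T^[p % d] '' M = M := by
      have e : T^[p] '' M = T^[p % d] '' M := by
        calc T^[p] '' M = T^[p % d + d * (p / d)] '' M := by rw [Nat.mod_add_div]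
        _ = T^[p % d] '' (T^[d * (p / d)] '' M) := by rw [Function.iterate_add, Set.image_comp]
        _ = T^[p % d] '' M := by rw [Nat.mul_comm, hqd]
      rw [← e, hTpM]
    by_cases h0 : p % d = 0
    · exact Nat.dvd_of_mod_eq_zero h0
    · exact absurd ⟨Nat.pos_of_ne_zero h0, hrM⟩ (hdmin _ (Nat.mod_lt p hdpos))
  rcases (Nat.Prime.eq_one_or_self_of_dvd hp d hdvd) with hd1 | hdp'
  · -- d = 1 : M is T-invariant, hence all of X, contradicting y ∉ K
    have hT1M : T^[1] '' M = M := hd1 ▸ hdM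
    have hTM : Set.MapsTo T M M := by
      intro z hz
      have : T z ∈ T^[1] '' M := ⟨z, hz, by simp⟩
      rwa [hT1M] at this
    have hMuniv : M = Set.univ := hmin M hMne hMcl hTM
    have hyM : y ∈ M := hMuniv ▸ Set.mem_univ y
    exact hyK (hCsubK (hMC hyM))
  · -- d = p : the pieces T^[i] '' M, i < p, are pairwise disjoint and cover X
    have hdisj : ∀ i j : ℕ, i < p → j < p → i ≠ j →
        ∀ z, z ∈ T^[i] '' M → z ∈ T^[j] '' M → False := by
      have key : ∀ i j : ℕ, i < j → j < p → ((T^[i] '' M) ∩ (T^[j] '' M)).Nonempty → False := by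
        intro i j hij hjp hne2
        have heq := hinter i j (by omega) (by omega) hne2
        have hMk : T^[(p - j) + i] '' M = M := by
          calc T^[(p - j) + i] '' M = T^[p - j] '' (T^[i] '' M) := by
                rw [Function.iterate_add, Set.image_comp]
          _ = T^[p - j] '' (T^[j] '' M) := by rw [heq]
          _ = T^[(p - j) + j] '' M := by rw [Function.iterate_add, Set.image_comp]
          _ = M := by rw [Nat.sub_add_cancel (le_of_lt hjp), hTpM]
        exact hdmin ((p - j) + i) (by omega) ⟨by omega, hMk⟩
      intro i j hip hjp hij z hzi hzj
      rcases Nat.lt_or_ge i j with h | h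
      · exact key i j h hjp ⟨z, hzi, hzj⟩
      · exact key j i (by omega) hip ⟨z, hzj, hzi⟩
    -- the union of the pieces is T-invariant, hence all of X
    have hUcover : (⋃ i ∈ Finset.range p, T^[i] '' M) = Set.univ := by
      apply hmin
      · obtain ⟨w, hw⟩ := hMne
        exact ⟨w, Set.mem_biUnion (Finset.mem_range.mpr hppos) ⟨w, hw, by simp⟩⟩
      · exact isClosed_biUnion_finset fun i _ => hMicl i
      · intro z hz
        simp only [Set.mem_iUnion, Finset.mem_range, exists_prop] at hz ⊢
        obtain ⟨i, hip, w, hw, rfl⟩ := hz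
        by_cases hi1 : i + 1 < p
        · exact ⟨i + 1, hi1, w, hw, by rw [Function.iterate_succ_apply']⟩
        · have hip1 : i + 1 = p := by omega
          have hmem : T (T^[i] w) ∈ T^[p] '' M :=
            ⟨w, hw, by rw [← hip1, Function.iterate_succ_apply']⟩
          rw [hTpM] at hmem
          exact ⟨0, hppos, by simpa using hmem⟩
    have hxU : x ∈ ⋃ i ∈ Finset.range p, T^[i] '' M := hUcover ▸ Set.mem_univ x
    simp only [Set.mem_iUnion, Finset.mem_range, exists_prop] at hxU
    obtain ⟨i₀, hi₀p, hxM⟩ := hxU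
    -- the piece containing x is open
    have hVpopen : IsOpen (T^[i₀] '' M) := by
      rw [← isClosed_compl_iff]
      have hcompl : (T^[i₀] '' M)ᶜ = ⋃ i ∈ Finset.range p, ⋃ _ : i ≠ i₀, T^[i] '' M := by
        ext z
        simp only [Set.mem_compl_iff, Set.mem_iUnion, Finset.mem_range, exists_prop]
        constructor
        · intro hz
          have hzU : z ∈ ⋃ i ∈ Finset.range p, T^[i] '' M := hUcover ▸ Set.mem_univ z
          simp only [Set.mem_iUnion, Finset.mem_range, exists_prop] at hzU
          obtain ⟨i, hipp, hzi⟩ := hzU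
          refine ⟨i, hipp, ?_, hzi⟩
          rintro rfl
          exact hz hzi
        · rintro ⟨i, hipp, hii, hzi⟩ hz
          exact hdisj i i₀ hipp hi₀p hii z hzi hz
      rw [hcompl]
      refine isClosed_biUnion_finset fun i _ => ?_
      rw [Set.iUnion_eq_if]
      by_cases h : i ≠ i₀
      · rw [if_pos h]
        exact hMicl i
      · rw [if_neg h]
        exact isClosed_empty
    -- return times of x to its piece are multiples of p
    have hdiv : ∀ t : ℕ, T^[t] x ∈ T^[i₀] '' M → t % p = 0 := by
      intro t ht
      have h1 : T^[t] x ∈ T^[(t + i₀) % p] '' M := by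
        have e : T^[t] '' (T^[i₀] '' M) = T^[(t + i₀) % p] '' M := by
          rw [← Set.image_comp, ← Function.iterate_add, hmodM]
        exact e ▸ Set.mem_image_of_mem _ hxM
      by_cases hmod : (t + i₀) % p = i₀
      · have hmeq : (t + i₀) % p = (0 + i₀) % p := by
          rw [hmod, Nat.zero_add, Nat.mod_eq_of_lt hi₀p]
        have h2 : t ≡ 0 [MOD p] := Nat.ModEq.add_right_cancel' i₀ hmeq
        simpa [Nat.ModEq] using h2
      · exact absurd h1 (fun h1 =>
          hdisj ((t + i₀) % p) i₀ (Nat.mod_lt _ hppos) hi₀p hmod _ h1 ht)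
    -- apply (★) to the piece containing x and the pattern {0, n'*p+1}
    obtain ⟨n', hn'⟩ := hstar (T^[i₀] '' M) (hVpopen.mem_nhds hxM)
    have hmn' : n' ≤ n' * p + 1 := by
      have : n' ≤ n' * p := Nat.le_mul_of_pos_right n' hppos
      omega
    have hgap2 : ∀ s ∈ ({0, n' * p + 1} : Finset ℕ), ∀ t ∈ ({0, n' * p + 1} : Finset ℕ),
        s < t → n' ≤ t - s := by
      intro s hs t ht hst
      simp only [Finset.mem_insert, Finset.mem_singleton] at hs ht
      rcases hs with rfl | rfl <;> rcases ht with rfl | rfl <;> omega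
    obtain ⟨ℓ, hℓ⟩ := hn' {0, n' * p + 1} hgap2
    · have h0 : T^[ℓ] x ∈ T^[i₀] '' M := by
        have := hℓ 0 (by simp)
        simpa using this
      have hm' : T^[(n' * p + 1) + ℓ] x ∈ T^[i₀] '' M := hℓ _ (by simp)
      have d0 : p ∣ ℓ := Nat.dvd_of_mod_eq_zero (hdiv ℓ h0)
      have d1 : p ∣ ((n' * p + 1) + ℓ) := Nat.dvd_of_mod_eq_zero (hdiv _ hm')
      have d2 : p ∣ (n' * p + ℓ) := Nat.dvd_add (dvd_mul_left p n') d0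
      have d3 : p ∣ 1 := by
        have h := Nat.dvd_sub d1 d2
        have e : (n' * p + 1) + ℓ - (n' * p + ℓ) = 1 := by omega
        rwa [e] at h
      have := Nat.le_of_dvd (by omega) d3
      omega


end PaperFormal
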